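/- Let k be a field of characteristic not two, s a three-dimensional simple Lie algebra over k with Killing form K, and h ∈ s. The characteristic polynomial of ad(h) is −X·(X² − K(h,h)/2). -/

import Mathlib

open Polynomial

private lemma charpoly_fin3_aux {k : Type*} [Field k] (hchar : (2:k) ≠ 0)
    (M : Matrix (Fin 3) (Fin 3) k) (c : k)
    (h1 : M.trace = 0) (h2 : M.det = 0) (h3 : (M * M).trace = 2 * c) :
    M.charpoly = X ^ 3 - C c * X := by
  have e1 : M 0 0 + M 1 1 + M 2 2 = 0 := by simpa [Matrix.trace_fin_three] using h1
  rw [Matrix.det_fin_three] at h2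
  have e3 : (M 0 0 * M 0 0 + M 0 1 * M 1 0 + M 0 2 * M 2 0)
      + (M 1 0 * M 0 1 + M 1 1 * M 1 1 + M 1 2 * M 2 1)
      + (M 2 0 * M 0 2 + M 2 1 * M 1 2 + M 2 2 * M 2 2) = 2 * c := by
    simpa [Matrix.trace_fin_three, Matrix.mul_apply, Fin.sum_univ_three] using h3
  have ep : M 0 0 * M 1 1 - M 0 1 * M 1 0 + M 0 0 * M 2 2 - M 0 2 * M 2 0
      + M 1 1 * M 2 2 - M 1 2 * M 2 1 = -c :=
    mul_left_cancel₀ hchar (by linear_combination (M 0 0 + M 1 1 + M 2 2) * e1 - e3)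
  have n01 : (0:Fin 3) ≠ 1 := by decide
  have n02 : (0:Fin 3) ≠ 2 := by decide
  have n10 : (1:Fin 3) ≠ 0 := by decide
  have n12 : (1:Fin 3) ≠ 2 := by decide
  have n20 : (2:Fin 3) ≠ 0 := by decide
  have n21 : (2:Fin 3) ≠ 1 := by decide
  rw [Matrix.charpoly, Matrix.det_fin_three, Matrix.charmatrix_apply_eq,
    Matrix.charmatrix_apply_eq, Matrix.charmatrix_apply_eq,
    Matrix.charmatrix_apply_ne _ _ _ n01, Matrix.charmatrix_apply_ne _ _ _ n02,
    Matrix.charmatrix_apply_ne _ _ _ n10, Matrix.charmatrix_apply_ne _ _ _ n12,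
    Matrix.charmatrix_apply_ne _ _ _ n20, Matrix.charmatrix_apply_ne _ _ _ n21]
  have E1 := congrArg (C : k →+* k[X]) e1
  have E2 := congrArg (C : k →+* k[X]) h2
  have Ep := congrArg (C : k →+* k[X]) ep
  simp only [map_add, map_sub, _root_.map_mul, map_zero, map_neg] at E1 E2 Ep
  linear_combination (-X^2) * E1 - E2 + X * Ep

/-- For a three-dimensional simple Lie algebra `s` over `k` (char ≠ 2) with Killing form `K`,
the characteristic polynomial of `ad(h)` is `−X·(X² − K(h,h)/2)` (written monically, i.e.
up to the sign convention for characteristic polynomials). -/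
theorem charpoly_ad_three_dim_simple (k : Type*) [Field k] (hchar : (2 : k) ≠ 0)
    (L : Type*) [LieRing L] [LieAlgebra k L] [Module.Finite k L]
    (hdim : Module.finrank k L = 3) [LieAlgebra.IsSimple k L] (h : L) :
    LinearMap.charpoly ((LieAlgebra.ad k L h) : L →ₗ[k] L) =
      -(-X * (X ^ 2 - C (killingForm k L h h / 2))) := by
  classical
  set f : L →ₗ[k] L := (LieAlgebra.ad k L h : L →ₗ[k] L) with hf
  -- trace of ad h is zero
  have htr : LinearMap.trace k L f = 0 := by
    have hd : (⁅(⊤ : LieIdeal k L), (⊤ : LieIdeal k L)⁆ : LieIdeal k L) = ⊤ := by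
      rcases LieAlgebra.IsSimple.eq_bot_or_eq_top
        (⁅(⊤ : LieIdeal k L), (⊤ : LieIdeal k L)⁆ : LieIdeal k L) with hb | ht
      · exfalso
        apply LieAlgebra.IsSimple.non_abelian (R := k) (L := L)
        constructor
        intro x y
        have : ⁅x, y⁆ ∈ (⁅(⊤ : LieIdeal k L), (⊤ : LieIdeal k L)⁆ : LieIdeal k L) :=
          LieSubmodule.lie_mem_lie trivial trivial
        rw [hb] at this
        simpa using this
      · exact ht
    have hmem0 : h ∈ (⁅(⊤ : LieIdeal k L), (⊤ : LieIdeal k L)⁆ : LieIdeal k L) := by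
      rw [hd]; trivial
    have hmem : h ∈ Submodule.span k
        { m | ∃ (x : (⊤ : LieIdeal k L)) (n : (⊤ : LieIdeal k L)), ⁅(x : L), (n : L)⁆ = m } := by
      rw [← LieSubmodule.lieIdeal_oper_eq_linear_span]
      exact hmem0
    rw [hf]
    refine Submodule.span_induction
      (p := fun m _ => LinearMap.trace k L (LieAlgebra.ad k L m) = 0) ?_ ?_ ?_ ?_ hmem
    · rintro m ⟨x, n, rfl⟩
      have hl : LieAlgebra.ad k L ⁅(x : L), (n : L)⁆ =
          ⁅LieAlgebra.ad k L (x : L), LieAlgebra.ad k L (n : L)⁆ := by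
        simp
      rw [hl, Ring.lie_def, map_sub, LinearMap.trace_mul_comm, sub_self]
    · show LinearMap.trace k L (LieAlgebra.ad k L (0:L)) = 0
      rw [map_zero (LieAlgebra.ad k L), map_zero]
    · intro x y _ _ hx hy
      rw [map_add (LieAlgebra.ad k L), map_add, hx, hy, add_zero]
    · intro a x _ hx
      rw [map_smul (LieAlgebra.ad k L), _root_.map_smul, hx, smul_zero]
  -- det of ad h is zero
  have hdet : LinearMap.det f = 0 := by
    by_cases hz : h = 0
    · rw [hf, hz, map_zero (LieAlgebra.ad k L)]
      rw [LinearMap.det_zero, hdim]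
      simp
    · by_contra hne
      have hinj : Function.Injective f := by
        have := (LinearMap.equivOfDetNeZero f hne).injective
        exact this
      apply hz
      apply hinj
      simp [hf]
  -- trace of (ad h)² is the Killing form
  have htr2 : LinearMap.trace k L (f ∘ₗ f) = killingForm k L h h := by
    rw [killingForm_apply_apply]
  -- pass to matrices
  let b : Module.Basis (Fin 3) k L := Module.finBasisOfFinrankEq k L hdim
  let M : Matrix (Fin 3) (Fin 3) k := LinearMap.toMatrix b b f
  have hM1 : M.trace = 0 := by
    rw [← LinearMap.trace_eq_matrix_trace k b f] at *
    exact htr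
  have hM2 : M.det = 0 := by rw [LinearMap.det_toMatrix] at *; exact hdet
  have hM3 : (M * M).trace = 2 * (killingForm k L h h / 2) := by
    have : M * M = LinearMap.toMatrix b b (f ∘ₗ f) := by
      rw [LinearMap.toMatrix_comp b b b]
    rw [this, ← LinearMap.trace_eq_matrix_trace k b]
    rw [htr2]
    field_simp
  have := charpoly_fin3_aux hchar M _ hM1 hM2 hM3
  rw [← LinearMap.charpoly_toMatrix f b]
  rw [this]
  ring
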